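/- arXiv:1006.3890 — 7 statements merged into one kernel-verified Lean document; each statement's English description precedes it below -/
import Mathlib

section
/- Let λ ∈ ℝ, let I ⊆ ℝ be an open interval, and let y : I → ℝ be a C³ function with y(x) ≠ 0 for all x ∈ I that satisfies 2·y·y'' − 3·(y')² + 4λ·y⁴ = 0 on I. Then there exist real constants c₁, c₂, c₃ with c₂² − 4c₁c₃ + 4λ = 0 such that y(x)·(c₁x² + c₂x + c₃) = 1 for all x ∈ I. -/
/-- Constancy of a function with zero derivative on an open convex set. -/
lemma aux_const_of_deriv_zero {f : ℝ → ℝ} {s : Set ℝ} (hc : Convex ℝ s) (ho : IsOpen s)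
    (hf : ∀ x ∈ s, HasDerivAt f 0 x) {x₀ x : ℝ} (hx₀ : x₀ ∈ s) (hx : x ∈ s) :
    f x = f x₀ := by
  apply hc.is_const_of_fderivWithin_eq_zero
    (fun z hz => ((hf z hz).differentiableAt).differentiableWithinAt)
    (fun z hz => ?_) hx hx₀
  rw [fderivWithin_of_isOpen ho hz, (hf z hz).hasFDerivAt.fderiv]
  apply ContinuousLinearMap.ext; intro w; simp

/-- A nonvanishing C³ solution of 2yy'' − 3(y')² + 4λy⁴ = 0 on an open interval
is of the form y = 1/(c₁x² + c₂x + c₃) with c₂² − 4c₁c₃ + 4λ = 0. -/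
theorem stmt_1 (lam a b : ℝ) (y : ℝ → ℝ)
    (hy : ContDiffOn ℝ 3 y (Set.Ioo a b))
    (hne : ∀ x ∈ Set.Ioo a b, y x ≠ 0)
    (hode : ∀ x ∈ Set.Ioo a b,
      2 * y x * deriv (deriv y) x - 3 * (deriv y x) ^ 2 + 4 * lam * (y x) ^ 4 = 0) :
    ∃ c₁ c₂ c₃ : ℝ, c₂ ^ 2 - 4 * c₁ * c₃ + 4 * lam = 0 ∧
      ∀ x ∈ Set.Ioo a b, y x * (c₁ * x ^ 2 + c₂ * x + c₃) = 1 := by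
  set s := Set.Ioo a b with hsdef
  rcases Set.eq_empty_or_nonempty s with hs | ⟨x₀, hx₀⟩
  · exact ⟨1, 0, lam, by ring, fun x hx => absurd hx (by simp [hs])⟩
  have ho : IsOpen s := isOpen_Ioo
  have hcv : Convex ℝ s := convex_Ioo a b
  -- first derivative exists
  have h1 : ∀ x ∈ s, HasDerivAt y (deriv y x) x := fun x hx =>
    ((hy.contDiffAt (ho.mem_nhds hx)).differentiableAt (by norm_num)).hasDerivAt
  -- second derivative exists
  have hy2 : ContDiffOn ℝ 2 (deriv y) s := hy.deriv_of_isOpen ho (by norm_num)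
  have h2 : ∀ x ∈ s, HasDerivAt (deriv y) (deriv (deriv y) x) x := fun x hx =>
    ((hy2.contDiffAt (ho.mem_nhds hx)).differentiableAt (by norm_num)).hasDerivAt
  set u : ℝ → ℝ := fun x => (y x)⁻¹ with hu
  set v : ℝ → ℝ := fun x => -(deriv y x / (y x) ^ 2) with hv
  set g : ℝ → ℝ := fun x => (deriv y x) ^ 2 / (2 * (y x) ^ 3) + 2 * lam * y x with hg
  have hu' : ∀ x ∈ s, HasDerivAt u (v x) x := fun x hx => by
    have := (h1 x hx).inv (hne x hx); exact this.congr_deriv (neg_div _ _)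
  have hv' : ∀ x ∈ s, HasDerivAt v (g x) x := fun x hx => by
    have hd := (((h2 x hx).div ((h1 x hx).pow 2) (pow_ne_zero 2 (hne x hx)))).neg
    simp only [hv, hg]
    refine hd.congr_deriv (Eq.symm ?_)
    simp only [Pi.pow_apply]
    have h0 := hne x hx
    have hODE := hode x hx
    field_simp
    linear_combination (y x) * hODE
  have hg' : ∀ x ∈ s, HasDerivAt g 0 x := fun x hx => by
    have h0 := hne x hx
    have hd : HasDerivAt g
        ((2 * deriv y x * deriv (deriv y) x * (2 * (y x) ^ 3)
            - (deriv y x) ^ 2 * (2 * (3 * (y x) ^ 2 * deriv y x))) / (2 * (y x) ^ 3) ^ 2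
          + 2 * lam * deriv y x) x := by
      have hpow : HasDerivAt (fun x => 2 * (y x) ^ 3) (2 * (3 * (y x) ^ 2 * deriv y x)) x := by
        simpa [mul_comm, mul_assoc, mul_left_comm] using ((h1 x hx).pow 3).const_mul 2
      have hsq : HasDerivAt (fun x => (deriv y x) ^ 2) (2 * deriv y x * deriv (deriv y) x) x := by
        exact ((h2 x hx).pow 2).congr_deriv (by simp [mul_comm])
      exact (hsq.div hpow (by positivity)).add ((h1 x hx).const_mul (2 * lam))
    convert hd using 1
    have hODE := hode x hx
    field_simp
    linear_combination (-deriv y x) * hODE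
  -- g is constant on s
  have hgconst : ∀ x ∈ s, g x = g x₀ := fun x hx =>
    aux_const_of_deriv_zero hcv ho hg' hx₀ hx
  set c₁ : ℝ := g x₀ / 2 with hc₁
  set c₂ : ℝ := v x₀ - g x₀ * x₀ with hc₂
  set c₃ : ℝ := u x₀ - (c₁ * x₀ ^ 2 + c₂ * x₀) with hc₃
  -- v x = 2 c₁ x + c₂ on s
  have hp : ∀ x ∈ s, v x = 2 * c₁ * x + c₂ := by
    intro x hx
    have := aux_const_of_deriv_zero hcv ho
      (f := fun x => v x - g x₀ * x)
      (fun z hz => by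
        exact ((hv' z hz).sub ((hasDerivAt_id z).const_mul (g x₀))).congr_deriv (by simp [hgconst z hz]))
      hx₀ hx
    simp only [hc₂, hc₁]
    linear_combination this
  -- u x = c₁ x² + c₂ x + c₃ on s
  have hq : ∀ x ∈ s, u x = c₁ * x ^ 2 + c₂ * x + c₃ := by
    intro x hx
    have := aux_const_of_deriv_zero hcv ho
      (f := fun x => u x - (c₁ * x ^ 2 + c₂ * x))
      (fun z hz => by
        have hd : HasDerivAt (fun x => c₁ * x ^ 2 + c₂ * x) (c₁ * (2 * z) + c₂) z := by
          exact ((((hasDerivAt_id z).pow 2).const_mul c₁).add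
            ((hasDerivAt_id z).const_mul c₂)).congr_deriv (by simp)
        have := (hu' z hz).sub hd
        have hvz := hp z hz
        refine this.congr_deriv (Eq.symm ?_)
        rw [hvz]; ring)
      hx₀ hx
    simp only [hc₃]
    linear_combination this
  refine ⟨c₁, c₂, c₃, ?_, ?_⟩
  · -- the constraint: use the pointwise identity v² - 2 u g = -4 lam at x₀
    have h0 := hne x₀ hx₀
    have key : (v x₀) ^ 2 - 2 * u x₀ * g x₀ = -(4 * lam) := by
      simp only [hv, hu, hg]
      field_simp
      ring
    have e1 : v x₀ = 2 * c₁ * x₀ + c₂ := hp x₀ hx₀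
    have e2 : u x₀ = c₁ * x₀ ^ 2 + c₂ * x₀ + c₃ := hq x₀ hx₀
    have e3 : g x₀ = 2 * c₁ := by rw [hc₁]; ring
    rw [e1, e2, e3] at key
    linear_combination key
  · intro x hx
    have := hq x hx
    have h0 := hne x hx
    rw [← this]
    simp only [hu]
    field_simp [hu]
end

section
/- Let λ ∈ ℝ, let I ⊆ ℝ be an open interval, and let w : I → ℝ be a C³ function with w(x) ≠ 0 for all x ∈ I that satisfies (w'(x))² − 2·w(x)·w''(x) + 4λ = 0 on I. Then w'''(x) = 0 for all x ∈ I; consequently there exist constants c₁, c₂, c₃ ∈ ℝ such that w(x) = c₁x² + c₂x + c₃ on I. -/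
lemma const_on_of_deriv_zero {s : Set ℝ} (hs : IsOpen s) (hc : Convex ℝ s)
    {f : ℝ → ℝ} (hf : DifferentiableOn ℝ f s) (h0 : ∀ x ∈ s, deriv f x = 0)
    {x y : ℝ} (hx : x ∈ s) (hy : y ∈ s) : f x = f y := by
  refine hc.is_const_of_fderivWithin_eq_zero hf (fun z hz => ?_) hx hy
  rw [fderivWithin_of_isOpen hs hz]
  have hd : HasDerivAt f 0 z := by
    have := (hf.differentiableAt (hs.mem_nhds hz)).hasDerivAt
    rwa [h0 z hz] at this
  have := hd.hasFDerivAt.fderiv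
  rw [this]
  ext
  simp

/-- A nonvanishing C³ solution of (w')² − 2ww'' + 4λ = 0 on an open interval has
vanishing third derivative, hence is a quadratic polynomial. -/
theorem stmt_3 (lam a b : ℝ) (w : ℝ → ℝ)
    (hw : ContDiffOn ℝ 3 w (Set.Ioo a b))
    (hne : ∀ x ∈ Set.Ioo a b, w x ≠ 0)
    (hode : ∀ x ∈ Set.Ioo a b,
      (deriv w x) ^ 2 - 2 * w x * deriv (deriv w) x + 4 * lam = 0) :
    (∀ x ∈ Set.Ioo a b, deriv (deriv (deriv w)) x = 0) ∧
      ∃ c₁ c₂ c₃ : ℝ, ∀ x ∈ Set.Ioo a b, w x = c₁ * x ^ 2 + c₂ * x + c₃ := by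
  set s := Set.Ioo a b with hsdef
  have hs : IsOpen s := isOpen_Ioo
  have hc : Convex ℝ s := convex_Ioo a b
  have hw1 : ContDiffOn ℝ 2 (deriv w) s := hw.deriv_of_isOpen hs (by norm_num)
  have hw2 : ContDiffOn ℝ 1 (deriv (deriv w)) s := hw1.deriv_of_isOpen hs (by norm_num)
  have hd0 : DifferentiableOn ℝ w s := hw.differentiableOn (by norm_num)
  have hd1 : DifferentiableOn ℝ (deriv w) s := hw1.differentiableOn (by norm_num)
  have hd2 : DifferentiableOn ℝ (deriv (deriv w)) s := hw2.differentiableOn (by norm_num)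
  have h1 : ∀ x ∈ s, HasDerivAt w (deriv w x) x :=
    fun x hx => (hd0.differentiableAt (hs.mem_nhds hx)).hasDerivAt
  have h2 : ∀ x ∈ s, HasDerivAt (deriv w) (deriv (deriv w) x) x :=
    fun x hx => (hd1.differentiableAt (hs.mem_nhds hx)).hasDerivAt
  have h3 : ∀ x ∈ s, HasDerivAt (deriv (deriv w)) (deriv (deriv (deriv w)) x) x :=
    fun x hx => (hd2.differentiableAt (hs.mem_nhds hx)).hasDerivAt
  have key : ∀ x ∈ s, deriv (deriv (deriv w)) x = 0 := by
    intro x hx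
    have hfe : (fun y => (deriv w y) ^ 2 - 2 * w y * deriv (deriv w) y + 4 * lam)
        =ᶠ[nhds x] (fun y => (deriv w y) ^ 2 - 2 * (w y * deriv (deriv w) y) + 4 * lam) :=
      Filter.EventuallyEq.of_eq (funext fun y => by ring)
    have hG := ((((h2 x hx).pow 2).sub
      (((h1 x hx).mul (h3 x hx)).const_mul 2)).add_const (4 * lam)).congr_of_eventuallyEq hfe
    have hG0 : HasDerivAt (fun y => (deriv w y) ^ 2 - 2 * w y * deriv (deriv w) y + 4 * lam)
        0 x := by
      have : (fun y => (deriv w y) ^ 2 - 2 * w y * deriv (deriv w) y + 4 * lam)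
          =ᶠ[nhds x] fun _ => (0 : ℝ) := by
        filter_upwards [hs.mem_nhds hx] with y hy using hode y hy
      exact (hasDerivAt_const x (0 : ℝ)).congr_of_eventuallyEq this
    have heq := hG.unique hG0
    have hwx := hne x hx
    have : w x * deriv (deriv (deriv w)) x = 0 := by
      push_cast at heq; norm_num at heq; nlinarith [heq]
    rcases mul_eq_zero.1 this with h | h
    · exact absurd h hwx
    · exact h
  refine ⟨key, ?_⟩
  by_cases hab : a < b
  · set x₀ := (a + b) / 2 with hx₀def
    have hx₀ : x₀ ∈ s := ⟨by linarith, by linarith⟩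
    set K := deriv (deriv w) x₀ with hK
    have hw2c : ∀ x ∈ s, deriv (deriv w) x = K :=
      fun x hx => const_on_of_deriv_zero hs hc hd2 key hx hx₀
    -- w' x = K * x + C₂
    set C₂ := deriv w x₀ - K * x₀ with hC₂
    have hw1c : ∀ x ∈ s, deriv w x = K * x + C₂ := by
      intro x hx
      have := const_on_of_deriv_zero hs hc
        (f := fun y => deriv w y - K * y)
        (hd1.sub ((differentiable_id.const_mul K).differentiableOn))
        (fun y hy => by
          have hdy : HasDerivAt (fun y => deriv w y - K * y) (deriv (deriv w) y - K) y := by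
            exact ((h2 y hy).sub ((hasDerivAt_id y).const_mul K)).congr_deriv (by ring)
          rw [hdy.deriv, hw2c y hy, sub_self])
        hx hx₀
      rw [hC₂]; linarith
    refine ⟨K / 2, C₂, w x₀ - K / 2 * x₀ ^ 2 - C₂ * x₀, ?_⟩
    intro x hx
    have := const_on_of_deriv_zero hs hc
      (f := fun y => w y - (K / 2 * y ^ 2 + C₂ * y))
      (hd0.sub (((differentiable_pow 2).const_mul (K / 2)).add
        (differentiable_id.const_mul C₂)).differentiableOn)
      (fun y hy => by
        have hdy : HasDerivAt (fun y => w y - (K / 2 * y ^ 2 + C₂ * y))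
            (deriv w y - (K / 2 * (2 * y ^ 1) + C₂ * 1)) y := by
          have := (h1 y hy).sub ((((hasDerivAt_pow 2 y)).const_mul (K / 2)).add
            ((hasDerivAt_id y).const_mul C₂))
          exact this.congr_deriv (by norm_num)
        rw [hdy.deriv, hw1c y hy]; ring)
      hx hx₀
    linarith
  · exact ⟨0, 0, 0, fun x hx => absurd hx (by simp [hsdef, Set.Ioo_eq_empty_of_le (le_of_not_gt hab)])⟩
end

section
/- Let λ ∈ ℝ, let U ⊆ ℝ² be an open set with coordinates (z₁, z₂), and let φ : U → ℝ be a C² positive function such that the quantity D := 4λφ⁴z₂² + (∂φ/∂z₂)²z₂² + 4(∂φ/∂z₂)·φ·z₂ + 4φ² is nonzero on U. Suppose φ satisfies on U both: (i) ∂φ/∂z₁ = z₁·( (∂φ/∂z₂)³·z₂ + 4λφ⁴·(∂φ/∂z₂)·z₂ − 4λφ⁵ + 3(∂φ/∂z₂)²·φ ) / D, and (ii) ∂²φ/∂z₁∂z₂ = z₁·( −16λ²φ⁸z₂ + 8λφ⁴(∂φ/∂z₂)²z₂ − 32λφ⁵(∂φ/∂z₂) + 3(∂φ/∂z₂)⁴z₂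 + 8(∂φ/∂z₂)³φ ) / (2φ·D). Then at every point of U either 3(∂φ/∂z₂)² − 2φ·(∂²φ/∂z₂²) − 4λφ⁴ = 0, or (∂φ/∂z₂)·(2φ + z₂·∂φ/∂z₂)·(z₂²(∂φ/∂z₂)² + 6z₂φ(∂φ/∂z₂) + 12φ²) + 8λz₂φ⁴·(2λz₂²φ⁴ + 4φ² + 4z₂φ(∂φ/∂z₂) + z₂²(∂φ/∂z₂)²) = 0. -/
open Filter Topology

/-- If a positive C² function φ(z₁,z₂) satisfies both characterizing first-order
equations (with nonvanishing denominator D), then at every point either equation (6) or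
equation (7) of the paper holds. -/
theorem stmt_4 (lam : ℝ) (U : Set (ℝ × ℝ)) (hU : IsOpen U)
    (φ : ℝ → ℝ → ℝ)
    (hC : ContDiffOn ℝ 2 (fun p : ℝ × ℝ => φ p.1 p.2) U)
    (hpos : ∀ p ∈ U, 0 < φ p.1 p.2)
    (hD : ∀ p ∈ U,
      4 * lam * (φ p.1 p.2) ^ 4 * p.2 ^ 2 + (deriv (φ p.1) p.2) ^ 2 * p.2 ^ 2 +
        4 * deriv (φ p.1) p.2 * φ p.1 p.2 * p.2 + 4 * (φ p.1 p.2) ^ 2 ≠ 0)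
    (heq1 : ∀ p ∈ U,
      deriv (fun s => φ s p.2) p.1 =
        p.1 * ((deriv (φ p.1) p.2) ^ 3 * p.2 +
            4 * lam * (φ p.1 p.2) ^ 4 * deriv (φ p.1) p.2 * p.2 -
            4 * lam * (φ p.1 p.2) ^ 5 + 3 * (deriv (φ p.1) p.2) ^ 2 * φ p.1 p.2) /
          (4 * lam * (φ p.1 p.2) ^ 4 * p.2 ^ 2 + (deriv (φ p.1) p.2) ^ 2 * p.2 ^ 2 +
            4 * deriv (φ p.1) p.2 * φ p.1 p.2 * p.2 + 4 * (φ p.1 p.2) ^ 2))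
    (heq2 : ∀ p ∈ U,
      deriv (fun s => deriv (φ s) p.2) p.1 =
        p.1 * (-16 * lam ^ 2 * (φ p.1 p.2) ^ 8 * p.2 +
            8 * lam * (φ p.1 p.2) ^ 4 * (deriv (φ p.1) p.2) ^ 2 * p.2 -
            32 * lam * (φ p.1 p.2) ^ 5 * deriv (φ p.1) p.2 +
            3 * (deriv (φ p.1) p.2) ^ 4 * p.2 + 8 * (deriv (φ p.1) p.2) ^ 3 * φ p.1 p.2) /
          (2 * φ p.1 p.2 *
            (4 * lam * (φ p.1 p.2) ^ 4 * p.2 ^ 2 + (deriv (φ p.1) p.2) ^ 2 * p.2 ^ 2 +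
              4 * deriv (φ p.1) p.2 * φ p.1 p.2 * p.2 + 4 * (φ p.1 p.2) ^ 2))) :
    ∀ p ∈ U,
      (3 * (deriv (φ p.1) p.2) ^ 2 - 2 * φ p.1 p.2 * deriv (deriv (φ p.1)) p.2 -
          4 * lam * (φ p.1 p.2) ^ 4 = 0) ∨
      (deriv (φ p.1) p.2 * (2 * φ p.1 p.2 + p.2 * deriv (φ p.1) p.2) *
          (p.2 ^ 2 * (deriv (φ p.1) p.2) ^ 2 + 6 * p.2 * φ p.1 p.2 * deriv (φ p.1) p.2 +
            12 * (φ p.1 p.2) ^ 2) +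
        8 * lam * p.2 * (φ p.1 p.2) ^ 4 *
          (2 * lam * p.2 ^ 2 * (φ p.1 p.2) ^ 4 + 4 * (φ p.1 p.2) ^ 2 +
            4 * p.2 * φ p.1 p.2 * deriv (φ p.1) p.2 +
            p.2 ^ 2 * (deriv (φ p.1) p.2) ^ 2) = 0) := by
  have hdiff : DifferentiableOn ℝ (fun p : ℝ × ℝ => φ p.1 p.2) U := hC.differentiableOn two_ne_zero
  set f : ℝ × ℝ → ℝ := fun q => φ q.1 q.2 with hfdef
  have hd : ∀ q ∈ U, HasFDerivAt f (fderiv ℝ f q) q := fun q hq =>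
    (hdiff.differentiableAt (hU.mem_nhds hq)).hasFDerivAt
  have hC1 : ContDiffOn ℝ 1 (fderiv ℝ f) U := hC.fderiv_of_isOpen hU (by norm_num)
  have hd2 : ∀ q ∈ U, HasFDerivAt (fderiv ℝ f) (fderiv ℝ (fderiv ℝ f) q) q := fun q hq =>
    ((hC1.differentiableOn one_ne_zero).differentiableAt (hU.mem_nhds hq)).hasFDerivAt
  have hvert : ∀ q ∈ U, HasDerivAt (φ q.1) (fderiv ℝ f q (0, 1)) q.2 := by
    intro q hq
    have h := (hd q hq).comp_hasDerivAt q.2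
      ((hasDerivAt_const q.2 q.1).prodMk (hasDerivAt_id q.2))
    simpa [Function.comp_def] using h
  have hhor : ∀ q ∈ U, HasDerivAt (fun s => φ s q.2) (fderiv ℝ f q (1, 0)) q.1 := by
    intro q hq
    have h := (hd q hq).comp_hasDerivAt q.1
      ((hasDerivAt_id q.1).prodMk (hasDerivAt_const q.1 q.2))
    simpa [Function.comp_def] using h
  have hgvert : ∀ q ∈ U, ∀ v : ℝ × ℝ, HasDerivAt (fun t => fderiv ℝ f (q.1, t) v)
      (fderiv ℝ (fderiv ℝ f) q (0, 1) v) q.2 := by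
    intro q hq v
    have h := ((ContinuousLinearMap.apply ℝ ℝ v).hasFDerivAt.comp q (hd2 q hq)).comp_hasDerivAt
      q.2 ((hasDerivAt_const q.2 q.1).prodMk (hasDerivAt_id q.2))
    simpa [Function.comp_def] using h
  have hghor : ∀ q ∈ U, ∀ v : ℝ × ℝ, HasDerivAt (fun s => fderiv ℝ f (s, q.2) v)
      (fderiv ℝ (fderiv ℝ f) q (1, 0) v) q.1 := by
    intro q hq v
    have h := ((ContinuousLinearMap.apply ℝ ℝ v).hasFDerivAt.comp q (hd2 q hq)).comp_hasDerivAt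
      q.1 ((hasDerivAt_id q.1).prodMk (hasDerivAt_const q.1 q.2))
    simpa [Function.comp_def] using h
  have hsymm : ∀ q ∈ U, fderiv ℝ (fderiv ℝ f) q (0, 1) (1, 0)
      = fderiv ℝ (fderiv ℝ f) q (1, 0) (0, 1) := by
    intro q hq
    exact second_derivative_symmetric_of_eventually
      (by filter_upwards [hU.mem_nhds hq] with m hm using hd m hm) (hd2 q hq) _ _
  have hnearV : ∀ q ∈ U, ∀ᶠ t in 𝓝 q.2, (q.1, t) ∈ U := by
    intro q hq
    have hc : ContinuousAt (fun t : ℝ => (q.1, t)) q.2 :=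
      (continuous_const.prodMk continuous_id).continuousAt
    exact hc (hU.mem_nhds hq)
  have hnearH : ∀ q ∈ U, ∀ᶠ s in 𝓝 q.1, (s, q.2) ∈ U := by
    intro q hq
    have hc : ContinuousAt (fun s : ℝ => (s, q.2)) q.1 :=
      (continuous_id.prodMk continuous_const).continuousAt
    exact hc (hU.mem_nhds hq)
  -- second partial ∂₂₂
  have hB2 : ∀ q ∈ U, HasDerivAt (deriv (φ q.1))
      (fderiv ℝ (fderiv ℝ f) q (0, 1) (0, 1)) q.2 := by
    intro q hq
    refine (hgvert q hq (0, 1)).congr_of_eventuallyEq ?_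
    filter_upwards [hnearV q hq] with t ht
    exact (hvert (q.1, t) ht).deriv
  have hB2d : ∀ q ∈ U, deriv (deriv (φ q.1)) q.2 = fderiv ℝ (fderiv ℝ f) q (0, 1) (0, 1) :=
    fun q hq => (hB2 q hq).deriv
  -- mixed partial ∂₂∂₁ as derivative in t of t ↦ ∂₁φ(q.1,t)
  have hMix1 : ∀ q ∈ U, HasDerivAt (fun t => deriv (fun s => φ s t) q.1)
      (fderiv ℝ (fderiv ℝ f) q (0, 1) (1, 0)) q.2 := by
    intro q hq
    refine (hgvert q hq (1, 0)).congr_of_eventuallyEq ?_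
    filter_upwards [hnearV q hq] with t ht
    exact (hhor (q.1, t) ht).deriv
  -- mixed partial ∂₁∂₂ as derivative in s of s ↦ ∂₂φ(s,q.2)
  have hMix2 : ∀ q ∈ U, HasDerivAt (fun s => deriv (φ s) q.2)
      (fderiv ℝ (fderiv ℝ f) q (1, 0) (0, 1)) q.1 := by
    intro q hq
    refine (hghor q hq (0, 1)).congr_of_eventuallyEq ?_
    filter_upwards [hnearH q hq] with s hs
    exact (hvert (s, q.2) hs).deriv
  -- MAIN pointwise computation at points with q.1 ≠ 0
  have main : ∀ q ∈ U, q.1 ≠ 0 →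
      (3 * (deriv (φ q.1) q.2) ^ 2 - 2 * φ q.1 q.2 * deriv (deriv (φ q.1)) q.2 -
          4 * lam * (φ q.1 q.2) ^ 4) *
        (deriv (φ q.1) q.2 * (2 * φ q.1 q.2 + q.2 * deriv (φ q.1) q.2) *
          (q.2 ^ 2 * (deriv (φ q.1) q.2) ^ 2 + 6 * q.2 * φ q.1 q.2 * deriv (φ q.1) q.2 +
            12 * (φ q.1 q.2) ^ 2) +
        8 * lam * q.2 * (φ q.1 q.2) ^ 4 *
          (2 * lam * q.2 ^ 2 * (φ q.1 q.2) ^ 4 + 4 * (φ q.1 q.2) ^ 2 +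
            4 * q.2 * φ q.1 q.2 * deriv (φ q.1) q.2 +
            q.2 ^ 2 * (deriv (φ q.1) q.2) ^ 2)) = 0 := by
    intro q hq hq1
    have ha : (0:ℝ) < φ q.1 q.2 := hpos q hq
    have hA : HasDerivAt (φ q.1) (deriv (φ q.1) q.2) q.2 := by
      rw [(hvert q hq).deriv]; exact hvert q hq
    have hBc : HasDerivAt (deriv (φ q.1)) (deriv (deriv (φ q.1)) q.2) q.2 := by
      rw [hB2d q hq]; exact hB2 q hq
    set a := φ q.1 q.2 with hadef
    set b := deriv (φ q.1) q.2 with hbdef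
    set c := deriv (deriv (φ q.1)) q.2 with hcdef
    have hDne : 4 * lam * a ^ 4 * q.2 ^ 2 + b ^ 2 * q.2 ^ 2 + 4 * b * a * q.2 + 4 * a ^ 2 ≠ 0 :=
      hD q hq
    have hNN : HasDerivAt (fun t => (deriv (φ q.1) t) ^ 3 * t +
          4 * lam * (φ q.1 t) ^ 4 * deriv (φ q.1) t * t -
          4 * lam * (φ q.1 t) ^ 5 + 3 * (deriv (φ q.1) t) ^ 2 * φ q.1 t)
        (3 * b ^ 2 * c * q.2 + b ^ 3 + 16 * lam * a ^ 3 * b ^ 2 * q.2 +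
          4 * lam * a ^ 4 * c * q.2 + 4 * lam * a ^ 4 * b -
          20 * lam * a ^ 4 * b + 6 * a * b * c + 3 * b ^ 3) q.2 := by
      have h := ((((hBc.pow 3).mul (hasDerivAt_id' (x := q.2))).add
          ((((hA.pow 4).const_mul (4 * lam)).mul hBc).mul (hasDerivAt_id' (x := q.2)))).sub
          ((hA.pow 5).const_mul (4 * lam))).add (((hBc.pow 2).const_mul 3).mul hA)
      refine (h.congr_deriv ?_).congr_of_eventuallyEq (Eventually.of_forall fun t => ?_)
      · simp only [Pi.pow_apply, Pi.mul_apply, Pi.add_apply, Pi.sub_apply]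
        push_cast
        ring
      · simp only [Pi.pow_apply, Pi.mul_apply, Pi.add_apply, Pi.sub_apply]
    have hDD : HasDerivAt (fun t => 4 * lam * (φ q.1 t) ^ 4 * t ^ 2 +
          (deriv (φ q.1) t) ^ 2 * t ^ 2 +
          4 * deriv (φ q.1) t * φ q.1 t * t + 4 * (φ q.1 t) ^ 2)
        (16 * lam * a ^ 3 * b * q.2 ^ 2 + 8 * lam * a ^ 4 * q.2 +
          2 * b * c * q.2 ^ 2 + 2 * b ^ 2 * q.2 +
          4 * c * a * q.2 + 4 * b ^ 2 * q.2 + 4 * b * a + 8 * a * b) q.2 := by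
      have h := (((((hA.pow 4).const_mul (4 * lam)).mul (hasDerivAt_pow 2 q.2)).add
          ((hBc.pow 2).mul (hasDerivAt_pow 2 q.2))).add
          (((hBc.const_mul 4).mul hA).mul (hasDerivAt_id' (x := q.2)))).add
          ((hA.pow 2).const_mul 4)
      refine (h.congr_deriv ?_).congr_of_eventuallyEq (Eventually.of_forall fun t => ?_)
      · simp only [Pi.pow_apply, Pi.mul_apply, Pi.add_apply, Pi.sub_apply]
        push_cast
        ring
      · simp only [Pi.pow_apply, Pi.mul_apply, Pi.add_apply, Pi.sub_apply]
    have hQ := (hNN.const_mul q.1).div hDD hDne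
    have hevq : (fun t => deriv (fun s => φ s t) q.1) =ᶠ[𝓝 q.2]
        (fun t => q.1 * ((deriv (φ q.1) t) ^ 3 * t +
            4 * lam * (φ q.1 t) ^ 4 * deriv (φ q.1) t * t -
            4 * lam * (φ q.1 t) ^ 5 + 3 * (deriv (φ q.1) t) ^ 2 * φ q.1 t) /
          (4 * lam * (φ q.1 t) ^ 4 * t ^ 2 + (deriv (φ q.1) t) ^ 2 * t ^ 2 +
            4 * deriv (φ q.1) t * φ q.1 t * t + 4 * (φ q.1 t) ^ 2)) := by
      filter_upwards [hnearV q hq] with t ht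
      exact heq1 (q.1, t) ht
    have hQ2 := hQ.congr_of_eventuallyEq hevq
    have huniq := (hMix1 q hq).unique hQ2
    have hchain : fderiv ℝ (fderiv ℝ f) q (1, 0) (0, 1) =
        q.1 * (-16 * lam ^ 2 * a ^ 8 * q.2 + 8 * lam * a ^ 4 * b ^ 2 * q.2 -
          32 * lam * a ^ 5 * b + 3 * b ^ 4 * q.2 + 8 * b ^ 3 * a) /
        (2 * a * (4 * lam * a ^ 4 * q.2 ^ 2 + b ^ 2 * q.2 ^ 2 + 4 * b * a * q.2 + 4 * a ^ 2)) :=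
      ((hMix2 q hq).deriv).symm.trans (heq2 q hq)
    rw [hsymm q hq, hchain] at huniq
    -- huniq : bigRHS = (q.1 * N' * D - q.1*N*D')/D^2   (as an equation between real numbers)
    have hane : a ≠ 0 := ne_of_gt ha
    have h2aD : 2 * a * (4 * lam * a ^ 4 * q.2 ^ 2 + b ^ 2 * q.2 ^ 2 + 4 * b * a * q.2 +
        4 * a ^ 2) ≠ 0 := by
      exact mul_ne_zero (mul_ne_zero two_ne_zero hane) hDne
    rw [div_eq_div_iff h2aD (pow_ne_zero 2 hDne)] at huniq
    have h6 : q.1 * (4 * lam * a ^ 4 * q.2 ^ 2 + b ^ 2 * q.2 ^ 2 + 4 * b * a * q.2 + 4 * a ^ 2) *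
        ((3 * b ^ 2 - 2 * a * c - 4 * lam * a ^ 4) *
          (b * (2 * a + q.2 * b) * (q.2 ^ 2 * b ^ 2 + 6 * q.2 * a * b + 12 * a ^ 2) +
            8 * lam * q.2 * a ^ 4 * (2 * lam * q.2 ^ 2 * a ^ 4 + 4 * a ^ 2 +
              4 * q.2 * a * b + q.2 ^ 2 * b ^ 2))) = 0 := by
      linear_combination huniq
    have h7 := (mul_eq_zero.mp h6).resolve_left (mul_ne_zero hq1 hDne)
    linear_combination h7
  -- continuity of the expression, in terms of fderiv data
  set F1 : ℝ × ℝ → ℝ := fun m => fderiv ℝ f m (0, 1) with hF1def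
  set F11 : ℝ × ℝ → ℝ := fun m => fderiv ℝ (fderiv ℝ f) m (0, 1) (0, 1) with hF11def
  set G : ℝ × ℝ → ℝ := fun m =>
    (3 * (F1 m) ^ 2 - 2 * φ m.1 m.2 * F11 m - 4 * lam * (φ m.1 m.2) ^ 4) *
      (F1 m * (2 * φ m.1 m.2 + m.2 * F1 m) *
        (m.2 ^ 2 * (F1 m) ^ 2 + 6 * m.2 * φ m.1 m.2 * F1 m + 12 * (φ m.1 m.2) ^ 2) +
      8 * lam * m.2 * (φ m.1 m.2) ^ 4 *
        (2 * lam * m.2 ^ 2 * (φ m.1 m.2) ^ 4 + 4 * (φ m.1 m.2) ^ 2 +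
          4 * m.2 * φ m.1 m.2 * F1 m + m.2 ^ 2 * (F1 m) ^ 2)) with hGdef
  have hGeq : ∀ q ∈ U, G q =
      (3 * (deriv (φ q.1) q.2) ^ 2 - 2 * φ q.1 q.2 * deriv (deriv (φ q.1)) q.2 -
          4 * lam * (φ q.1 q.2) ^ 4) *
        (deriv (φ q.1) q.2 * (2 * φ q.1 q.2 + q.2 * deriv (φ q.1) q.2) *
          (q.2 ^ 2 * (deriv (φ q.1) q.2) ^ 2 + 6 * q.2 * φ q.1 q.2 * deriv (φ q.1) q.2 +
            12 * (φ q.1 q.2) ^ 2) +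
        8 * lam * q.2 * (φ q.1 q.2) ^ 4 *
          (2 * lam * q.2 ^ 2 * (φ q.1 q.2) ^ 4 + 4 * (φ q.1 q.2) ^ 2 +
            4 * q.2 * φ q.1 q.2 * deriv (φ q.1) q.2 +
            q.2 ^ 2 * (deriv (φ q.1) q.2) ^ 2)) := by
    intro q hq
    have h1 : F1 q = deriv (φ q.1) q.2 := ((hvert q hq).deriv).symm
    have h2 : F11 q = deriv (deriv (φ q.1)) q.2 := (hB2d q hq).symm
    rw [hGdef]
    simp only [h1, h2]
  have hGcont : ContinuousOn G U := by
    have h1 : ContinuousOn f U := hC.continuousOn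
    have h2 : ContinuousOn F1 U :=
      (hC.continuousOn_fderiv_of_isOpen hU one_le_two).clm_apply continuousOn_const
    have h3 : ContinuousOn F11 U :=
      ((hC1.continuousOn_fderiv_of_isOpen hU le_rfl).clm_apply continuousOn_const).clm_apply
        continuousOn_const
    have h4 : ContinuousOn (fun m : ℝ × ℝ => m.2) U := continuous_snd.continuousOn
    have h1' : ContinuousOn (fun m : ℝ × ℝ => φ m.1 m.2) U := h1
    rw [hGdef]
    fun_prop
  have hG0 : ∀ q ∈ U, G q = 0 := by
    intro q hq
    rcases eq_or_ne q.1 0 with h0 | h0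
    · obtain ⟨x, y⟩ := q
      simp only at h0
      subst h0
      have hseq : Tendsto (fun n : ℕ => (((1:ℝ) / (n + 1) : ℝ), y)) atTop (𝓝 ((0:ℝ), y)) :=
        tendsto_one_div_add_atTop_nhds_zero_nat.prodMk_nhds tendsto_const_nhds
      have hev : ∀ᶠ n : ℕ in atTop, (((1:ℝ) / (n + 1) : ℝ), y) ∈ U :=
        hseq.eventually_mem (hU.mem_nhds hq)
      have hlim : Tendsto (fun n : ℕ => G (((1:ℝ) / (n + 1) : ℝ), y)) atTop (𝓝 (G (0, y))) :=
        ((hGcont.continuousAt (hU.mem_nhds hq)).tendsto).comp hseq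
      have hzero : ∀ᶠ n : ℕ in atTop, G (((1:ℝ) / (n + 1) : ℝ), y) = 0 := by
        filter_upwards [hev] with n hn
        have hne : ((1:ℝ) / (n + 1)) ≠ 0 := by positivity
        rw [hGeq _ hn]
        exact main _ hn hne
      exact tendsto_nhds_unique (hlim.congr' hzero) tendsto_const_nhds
    · rw [hGeq q hq]
      exact main q hq h0
  intro p hp
  have h := hG0 p hp
  rw [hGeq p hp] at h
  rcases mul_eq_zero.mp h with h | h
  · exact Or.inl h
  · exact Or.inr h
end

section
/- Let I ⊆ (0, ∞) be an open interval and let c₁, c₂ : I → ℝ be C¹ functions with c₁(z) > 0 for all z ∈ I, satisfying for all z ∈ I: z·c₁(z) + c₂(z)²·c₁'(z) = 0 and 3·z·c₁(z)·c₂(z) + c₂(z)³·c₁'(z) + 2·c₁(z)·c₂(z)²·c₂'(z) = 0. Then there exist constants c > 0 and d > 0 and a sign ε ∈ {+1, −1} such that for all z ∈ I: c₂(z) = ε·√(c − z²) and c₁(z) = d·√(c − z²). -/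
open Set Real

private lemma const_of_hasDerivAt_zero {f : ℝ → ℝ} {a b : ℝ}
    (hf : ∀ x ∈ Ioo a b, HasDerivAt f 0 x) {x y : ℝ}
    (hx : x ∈ Ioo a b) (hy : y ∈ Ioo a b) : f x = f y := by
  apply (convex_Ioo a b).is_const_of_fderivWithin_eq_zero
    (fun z hz => (hf z hz).differentiableAt.differentiableWithinAt)
    (fun z hz => ?_) hx hy
  rw [fderivWithin_eq_fderiv (isOpen_Ioo.uniqueDiffOn z hz) (hf z hz).differentiableAt]
  ext
  rw [(hf z hz).hasFDerivAt.fderiv]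
  simp

/-- Positive C¹ solutions on I ⊆ (0,∞) of z·c₁ + c₂²·c₁' = 0 and
3z·c₁·c₂ + c₂³·c₁' + 2c₁·c₂²·c₂' = 0 are c₂ = ±√(c−z²), c₁ = d√(c−z²). -/
theorem stmt_7 (a b : ℝ) (ha : 0 ≤ a) (c₁ c₂ : ℝ → ℝ)
    (hc₁ : ContDiffOn ℝ 1 c₁ (Set.Ioo a b)) (hc₂ : ContDiffOn ℝ 1 c₂ (Set.Ioo a b))
    (hpos : ∀ z ∈ Set.Ioo a b, 0 < c₁ z)
    (h1 : ∀ z ∈ Set.Ioo a b, z * c₁ z + (c₂ z) ^ 2 * deriv c₁ z = 0)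
    (h2 : ∀ z ∈ Set.Ioo a b,
      3 * z * c₁ z * c₂ z + (c₂ z) ^ 3 * deriv c₁ z +
        2 * c₁ z * (c₂ z) ^ 2 * deriv c₂ z = 0) :
    ∃ c > (0 : ℝ), ∃ d > (0 : ℝ), ∃ ε : ℝ, (ε = 1 ∨ ε = -1) ∧
      ∀ z ∈ Set.Ioo a b,
        c₂ z = ε * Real.sqrt (c - z ^ 2) ∧ c₁ z = d * Real.sqrt (c - z ^ 2) := by
  by_cases hab : a < b
  swap
  · exact ⟨1, one_pos, 1, one_pos, 1, Or.inl rfl, fun z hz =>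
      absurd hz (by simp [Set.Ioo_eq_empty hab])⟩
  -- basic facts
  have hzpos : ∀ z ∈ Ioo a b, 0 < z := fun z hz => lt_of_le_of_lt ha hz.1
  have hc₂ne : ∀ z ∈ Ioo a b, c₂ z ≠ 0 := by
    intro z hz h0
    have e := h1 z hz
    rw [h0] at e
    have := mul_pos (hzpos z hz) (hpos z hz)
    nlinarith
  have d1 : ∀ z ∈ Ioo a b, HasDerivAt c₁ (deriv c₁ z) z := fun z hz =>
    (((hc₁.differentiableOn one_ne_zero) z hz).differentiableAt
      (isOpen_Ioo.mem_nhds hz)).hasDerivAt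
  have d2 : ∀ z ∈ Ioo a b, HasDerivAt c₂ (deriv c₂ z) z := fun z hz =>
    (((hc₂.differentiableOn one_ne_zero) z hz).differentiableAt
      (isOpen_Ioo.mem_nhds hz)).hasDerivAt
  have key : ∀ z ∈ Ioo a b, c₂ z * deriv c₂ z = -z := by
    intro z hz
    have hprod : 2 * c₁ z * c₂ z * (z + c₂ z * deriv c₂ z) = 0 := by
      linear_combination h2 z hz - c₂ z * h1 z hz
    have hne : 2 * c₁ z * c₂ z ≠ 0 :=
      mul_ne_zero (mul_ne_zero two_ne_zero (hpos z hz).ne') (hc₂ne z hz)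
    have := (mul_eq_zero.1 hprod).resolve_left hne
    linarith
  set z₀ : ℝ := (a + b) / 2 with hz₀def
  have hz₀ : z₀ ∈ Ioo a b := ⟨by simp [hz₀def]; linarith, by simp [hz₀def]; linarith⟩
  set c : ℝ := c₂ z₀ ^ 2 + z₀ ^ 2 with hcdef
  -- c₂ z ^ 2 + z ^ 2 is constant
  have hconst : ∀ z ∈ Ioo a b, c₂ z ^ 2 + z ^ 2 = c := by
    intro z hz
    refine const_of_hasDerivAt_zero (f := fun z => c₂ z ^ 2 + z ^ 2) ?_ hz hz₀
    intro x hx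
    have h := ((d2 x hx).pow 2).add ((hasDerivAt_pow 2 x))
    refine h.congr_deriv ?_
    have := key x hx
    push_cast
    ring_nf
    nlinarith [key x hx]
  have hcz : ∀ z ∈ Ioo a b, c - z ^ 2 = c₂ z ^ 2 := by
    intro z hz; have := hconst z hz; linarith
  have hczpos : ∀ z ∈ Ioo a b, 0 < c - z ^ 2 := by
    intro z hz
    rw [hcz z hz]
    have h := hc₂ne z hz
    positivity
  have hsqrt : ∀ z ∈ Ioo a b, Real.sqrt (c - z ^ 2) = |c₂ z| := by
    intro z hz; rw [hcz z hz, Real.sqrt_sq_eq_abs]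
  have hcpos : 0 < c := by
    have := hzpos z₀ hz₀
    have := hc₂ne z₀ hz₀
    nlinarith
  -- c₁ z ^2 / (c - z^2) constant
  have hq : ∀ z ∈ Ioo a b, c₁ z ^ 2 / (c - z ^ 2) = c₁ z₀ ^ 2 / (c - z₀ ^ 2) := by
    intro z hz
    refine const_of_hasDerivAt_zero (f := fun z => c₁ z ^ 2 / (c - z ^ 2)) ?_ hz hz₀
    intro x hx
    have hden : c - x ^ 2 ≠ 0 := (hczpos x hx).ne'
    have hd : HasDerivAt (fun z : ℝ => c - z ^ 2) (-(2 * x)) x := by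
      simpa using ((hasDerivAt_pow 2 x).const_sub c)
    have h := ((d1 x hx).pow 2).div hd hden
    refine h.congr_deriv ?_
    rw [div_eq_zero_iff, Pi.pow_apply]
    left
    have e1 := h1 x hx
    have e2 := hcz x hx
    push_cast
    linear_combination (2 * c₁ x) * e1 + (2 * c₁ x * deriv c₁ x) * e2
  set d : ℝ := c₁ z₀ / Real.sqrt (c - z₀ ^ 2) with hddef
  have hsz₀ : 0 < Real.sqrt (c - z₀ ^ 2) := Real.sqrt_pos.2 (hczpos z₀ hz₀)
  have hdpos : 0 < d := div_pos (hpos z₀ hz₀) hsz₀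
  have hc₁eq : ∀ z ∈ Ioo a b, c₁ z = d * Real.sqrt (c - z ^ 2) := by
    intro z hz
    have hq' := hq z hz
    have h1pos := hpos z hz
    have hsz : 0 < Real.sqrt (c - z ^ 2) := Real.sqrt_pos.2 (hczpos z hz)
    have hsq : Real.sqrt (c - z ^ 2) ^ 2 = c - z ^ 2 := Real.sq_sqrt (hczpos z hz).le
    have hsq₀ : Real.sqrt (c - z₀ ^ 2) ^ 2 = c - z₀ ^ 2 := Real.sq_sqrt (hczpos z₀ hz₀).le
    have hsqeq : c₁ z ^ 2 = (d * Real.sqrt (c - z ^ 2)) ^ 2 := by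
      have hne := (hczpos z hz).ne'
      have hne₀ := (hczpos z₀ hz₀).ne'
      field_simp [hddef] at hq' ⊢
      rw [hddef, div_pow, hsq₀, hsq, div_mul_eq_mul_div, eq_div_iff hne₀]
      nlinarith [hq']
    have : 0 < d * Real.sqrt (c - z ^ 2) := mul_pos hdpos hsz
    nlinarith [hsqeq]
  -- sign
  have hsign : ∀ x ∈ Ioo a b, ∀ y ∈ Ioo a b, c₂ x < 0 → 0 < c₂ y → False := by
    intro x hx y hy hxneg hypos
    have hsub : uIcc x y ⊆ Ioo a b := (Set.ordConnected_Ioo).uIcc_subset hx hy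
    have hcont : ContinuousOn c₂ (uIcc x y) := hc₂.continuousOn.mono hsub
    have h0 : (0 : ℝ) ∈ uIcc (c₂ x) (c₂ y) := by
      rw [Set.mem_uIcc]; left; exact ⟨hxneg.le, hypos.le⟩
    obtain ⟨t, ht, h0t⟩ := intermediate_value_uIcc hcont h0
    exact hc₂ne t (hsub ht) h0t
  by_cases hs : 0 < c₂ z₀
  · refine ⟨c, hcpos, d, hdpos, 1, Or.inl rfl, fun z hz => ⟨?_, hc₁eq z hz⟩⟩
    have hzp : 0 < c₂ z := by
      rcases (hc₂ne z hz).lt_or_gt with h | h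
      · exact absurd (hsign z hz z₀ hz₀ h hs) (fun h => h)
      · exact h
    rw [one_mul, hsqrt z hz, abs_of_pos hzp]
  · have hz₀neg : c₂ z₀ < 0 := (hc₂ne z₀ hz₀).lt_or_gt.resolve_right hs
    refine ⟨c, hcpos, d, hdpos, -1, Or.inr rfl, fun z hz => ⟨?_, hc₁eq z hz⟩⟩
    have hzn : c₂ z < 0 := by
      rcases (hc₂ne z hz).lt_or_gt with h | h
      · exact h
      · exact absurd (hsign z₀ hz₀ z hz hz₀neg h) (fun h => h)
    rw [hsqrt z hz, abs_of_neg hzn]; ring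
end

section
/- Let I ⊆ ℝ be an open interval, let d₁ ∈ ℝ, and let c₁ : I → ℝ be a C¹ function with c₁(z) > 0 for all z ∈ I satisfying c₁'(z)·(c₁(z)⁴ + d₁²) = z·c₁(z)³ on I. Then there exists a constant d₂ ∈ ℝ such that for all z ∈ I: c₁(z)² − d₁²/c₁(z)² = z² + 2d₂; equivalently, c₁(z)² = ( z² + 2d₂ + √((z² + 2d₂)² + 4d₁²) ) / 2. -/
/-- A positive C¹ solution of c₁'·(c₁⁴ + d₁²) = z·c₁³ satisfies
c₁² − d₁²/c₁² = z² + 2d₂ for a constant d₂, equivalently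
c₁² = (z² + 2d₂ + √((z² + 2d₂)² + 4d₁²))/2. -/
theorem stmt_12 (a b d₁ : ℝ) (c₁ : ℝ → ℝ)
    (hc₁ : ContDiffOn ℝ 1 c₁ (Set.Ioo a b))
    (hpos : ∀ z ∈ Set.Ioo a b, 0 < c₁ z)
    (hode : ∀ z ∈ Set.Ioo a b, deriv c₁ z * ((c₁ z) ^ 4 + d₁ ^ 2) = z * (c₁ z) ^ 3) :
    ∃ d₂ : ℝ, ∀ z ∈ Set.Ioo a b,
      (c₁ z) ^ 2 - d₁ ^ 2 / (c₁ z) ^ 2 = z ^ 2 + 2 * d₂ ∧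
      (c₁ z) ^ 2 = (z ^ 2 + 2 * d₂ + Real.sqrt ((z ^ 2 + 2 * d₂) ^ 2 + 4 * d₁ ^ 2)) / 2 := by
  rcases Set.eq_empty_or_nonempty (Set.Ioo a b) with he | ⟨z₀, hz₀⟩
  · exact ⟨0, fun z hz => by rw [he] at hz; exact absurd hz (Set.notMem_empty z)⟩
  set g : ℝ → ℝ := fun z => c₁ z ^ 2 - d₁ ^ 2 / (c₁ z) ^ 2 - z ^ 2 with hg
  have hderiv : ∀ z ∈ Set.Ioo a b, HasDerivAt g 0 z := by
    intro z hz
    have hcd : DifferentiableAt ℝ c₁ z :=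
      (hc₁.differentiableOn one_ne_zero z hz).differentiableAt (isOpen_Ioo.mem_nhds hz)
    have hc : HasDerivAt c₁ (deriv c₁ z) z := hcd.hasDerivAt
    have hcpos := hpos z hz
    have hcne : (c₁ z) ^ 2 ≠ 0 := pow_ne_zero 2 hcpos.ne'
    have h1 : HasDerivAt (fun z => c₁ z ^ 2) (2 * c₁ z * deriv c₁ z) z := by
      simpa [mul_comm] using hc.fun_pow 2
    have h2 : HasDerivAt (fun z => d₁ ^ 2 / (c₁ z) ^ 2)
        ((0 * (c₁ z ^ 2) - d₁ ^ 2 * (2 * c₁ z * deriv c₁ z)) / (c₁ z ^ 2) ^ 2) z :=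
      (hasDerivAt_const z (d₁ ^ 2)).div h1 hcne
    have h3 : HasDerivAt (fun z : ℝ => z ^ 2) (2 * z) z := by
      simpa using (hasDerivAt_id z).fun_pow 2
    have := (h1.sub h2).sub h3
    refine this.congr_deriv ?_
    have hode' := hode z hz
    field_simp
    nlinarith [hode', sq_nonneg (c₁ z), hcpos]
  have hconst : ∀ z ∈ Set.Ioo a b, g z = g z₀ := by
    intro z hz
    refine (convex_Ioo a b).is_const_of_fderivWithin_eq_zero
      (fun x hx => ((hderiv x hx).differentiableAt.differentiableWithinAt)) ?_ hz hz₀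
    intro x hx
    rw [fderivWithin_of_isOpen isOpen_Ioo hx, (hderiv x hx).hasFDerivAt.fderiv]
    ext; simp
  refine ⟨g z₀ / 2, fun z hz => ?_⟩
  have hcpos := hpos z hz
  have hu : (0:ℝ) < c₁ z ^ 2 := pow_pos hcpos 2
  have h1 : (c₁ z) ^ 2 - d₁ ^ 2 / (c₁ z) ^ 2 = z ^ 2 + 2 * (g z₀ / 2) := by
    have := hconst z hz
    simp only [hg] at this
    linarith
  refine ⟨h1, ?_⟩
  set s := z ^ 2 + 2 * (g z₀ / 2) with hs
  have hkey : s ^ 2 + 4 * d₁ ^ 2 = (2 * c₁ z ^ 2 - s) ^ 2 := by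
    rw [← h1]; field_simp; ring
  have hnn : 0 ≤ 2 * c₁ z ^ 2 - s := by
    rw [← h1]
    have : 0 ≤ d₁ ^ 2 / c₁ z ^ 2 := div_nonneg (sq_nonneg _) hu.le
    linarith
  rw [hkey, Real.sqrt_sq hnn]
  ring
end

section
/- (Classification of solutions, K = −1 case.) Let I ⊆ ℝ be an open interval and let c₁, c₂ : I → ℝ be C¹ functions with c₁(z) ≠ 0 and c₁(z)² ≠ c₂(z)² for all z ∈ I, satisfying for all z ∈ I the system: (i) −z·c₁ + c₁'·c₂² − c₁'·c₁² = 0; (ii) −2c₁'c₁²c₂ − 2c₁c₂²c₂' + 2c₁'c₂³ + 2c₁³c₂' − 4z·c₁c₂ = 0; (iii) c₁'c₂⁴ − 2c₁c₂³c₂' + 2c₁³c₂c₂' − 3z·c₁c₂² − c₁⁴c₁' − z·c₁³ = 0. Then there exist constants d₁, d₂ ∈ ℝ such that for all z ∈ I: c₁(z)·c₂(z) = d₁ and c₁(z)² + c₂(z)² = 2d₂ − z²; consequently, when c₁ > 0 and c₁² > c₂², c₁(z)² = ( 2d₂ − z² + √((2d₂ − z²)² − 4d₁²) ) / 2 and c₂(z)²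 = ( 2d₂ − z² − √((2d₂ − z²)² − 4d₁²) ) / 2, and in the case d₁ = 0 one has c₂ ≡ 0 and c₁(z)² = 2d₂ − z². -/
lemma const_on_Ioo {f : ℝ → ℝ} {a b x y : ℝ}
    (hf : ∀ z ∈ Set.Ioo a b, DifferentiableAt ℝ f z)
    (h' : ∀ z ∈ Set.Ioo a b, deriv f z = 0)
    (hx : x ∈ Set.Ioo a b) (hy : y ∈ Set.Ioo a b) : f x = f y := by
  apply (convex_Ioo a b).is_const_of_fderivWithin_eq_zero
    (fun z hz => (hf z hz).differentiableWithinAt) _ hx hy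
  intro z hz
  rw [fderivWithin_of_isOpen isOpen_Ioo hz]
  ext
  simp [← toSpanSingleton_deriv, h' z hz]

/-- Classification of solutions, K = −1 case: there are constants d₁, d₂ with
c₁c₂ = d₁ and c₁² + c₂² = 2d₂ − z²; when c₁ > 0 and c₁² > c₂²,
c₁² = (2d₂ − z² + √((2d₂ − z²)² − 4d₁²))/2 and c₂² = (2d₂ − z² − √((2d₂ − z²)² − 4d₁²))/2;
and when d₁ = 0, c₂ ≡ 0 and c₁² = 2d₂ − z². -/
theorem stmt_16 (a b : ℝ) (c₁ c₂ : ℝ → ℝ)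
    (hc₁ : ContDiffOn ℝ 1 c₁ (Set.Ioo a b)) (hc₂ : ContDiffOn ℝ 1 c₂ (Set.Ioo a b))
    (hne : ∀ z ∈ Set.Ioo a b, c₁ z ≠ 0)
    (hne2 : ∀ z ∈ Set.Ioo a b, (c₁ z) ^ 2 ≠ (c₂ z) ^ 2)
    (h1 : ∀ z ∈ Set.Ioo a b,
      -(z * c₁ z) + deriv c₁ z * (c₂ z) ^ 2 - deriv c₁ z * (c₁ z) ^ 2 = 0)
    (h2 : ∀ z ∈ Set.Ioo a b,
      -2 * deriv c₁ z * (c₁ z) ^ 2 * c₂ z - 2 * c₁ z * (c₂ z) ^ 2 * deriv c₂ z +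
        2 * deriv c₁ z * (c₂ z) ^ 3 + 2 * (c₁ z) ^ 3 * deriv c₂ z -
        4 * z * c₁ z * c₂ z = 0)
    (h3 : ∀ z ∈ Set.Ioo a b,
      deriv c₁ z * (c₂ z) ^ 4 - 2 * c₁ z * (c₂ z) ^ 3 * deriv c₂ z +
        2 * (c₁ z) ^ 3 * c₂ z * deriv c₂ z - 3 * z * c₁ z * (c₂ z) ^ 2 -
        (c₁ z) ^ 4 * deriv c₁ z - z * (c₁ z) ^ 3 = 0) :
    ∃ d₁ d₂ : ℝ,
      (∀ z ∈ Set.Ioo a b,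
        c₁ z * c₂ z = d₁ ∧ (c₁ z) ^ 2 + (c₂ z) ^ 2 = 2 * d₂ - z ^ 2) ∧
      ((∀ z ∈ Set.Ioo a b, 0 < c₁ z ∧ (c₂ z) ^ 2 < (c₁ z) ^ 2) →
        ∀ z ∈ Set.Ioo a b,
          (c₁ z) ^ 2 =
            (2 * d₂ - z ^ 2 + Real.sqrt ((2 * d₂ - z ^ 2) ^ 2 - 4 * d₁ ^ 2)) / 2 ∧
          (c₂ z) ^ 2 =
            (2 * d₂ - z ^ 2 - Real.sqrt ((2 * d₂ - z ^ 2) ^ 2 - 4 * d₁ ^ 2)) / 2) ∧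
      (d₁ = 0 → ∀ z ∈ Set.Ioo a b, c₂ z = 0 ∧ (c₁ z) ^ 2 = 2 * d₂ - z ^ 2) := by
  rcases (Set.Ioo a b).eq_empty_or_nonempty with hE | ⟨x₀, hx₀⟩
  · refine ⟨0, 0, ?_, ?_, ?_⟩ <;> simp [hE]
  -- differentiability
  have hd₁ : ∀ z ∈ Set.Ioo a b, DifferentiableAt ℝ c₁ z := fun z hz =>
    (hc₁.differentiableOn one_ne_zero z hz).differentiableAt (isOpen_Ioo.mem_nhds hz)
  have hd₂ : ∀ z ∈ Set.Ioo a b, DifferentiableAt ℝ c₂ z := fun z hz =>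
    (hc₂.differentiableOn one_ne_zero z hz).differentiableAt (isOpen_Ioo.mem_nhds hz)
  -- key derivative identities
  have key : ∀ z ∈ Set.Ioo a b,
      deriv c₁ z * c₂ z + c₁ z * deriv c₂ z = 0 ∧
      2 * c₁ z * deriv c₁ z + 2 * c₂ z * deriv c₂ z + 2 * z = 0 := by
    intro z hz
    have e1 := h1 z hz
    have e2 := h2 z hz
    have hu := hne z hz
    have hv : (c₂ z) ^ 2 - (c₁ z) ^ 2 ≠ 0 := sub_ne_zero.mpr (Ne.symm (hne2 z hz))
    have eu : deriv c₁ z * ((c₂ z) ^ 2 - (c₁ z) ^ 2) = z * c₁ z := by linear_combination e1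
    have hA : (deriv c₂ z * ((c₂ z) ^ 2 - (c₁ z) ^ 2) + z * c₂ z) * (2 * c₁ z) = 0 := by
      linear_combination 2 * c₂ z * eu - e2
    have ev : deriv c₂ z * ((c₂ z) ^ 2 - (c₁ z) ^ 2) = -(z * c₂ z) := by
      rcases mul_eq_zero.mp hA with h | h
      · linarith
      · exact absurd (by linarith) hu
    constructor
    · have : (deriv c₁ z * c₂ z + c₁ z * deriv c₂ z) * ((c₂ z) ^ 2 - (c₁ z) ^ 2) = 0 := by
        linear_combination c₂ z * eu + c₁ z * ev
      exact (mul_eq_zero.mp this).resolve_right hv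
    · have : (2 * c₁ z * deriv c₁ z + 2 * c₂ z * deriv c₂ z + 2 * z) *
          ((c₂ z) ^ 2 - (c₁ z) ^ 2) = 0 := by
        linear_combination 2 * c₁ z * eu + 2 * c₂ z * ev
      exact (mul_eq_zero.mp this).resolve_right hv
  -- constants
  set d₁ := c₁ x₀ * c₂ x₀ with hd₁def
  set d₂ := ((c₁ x₀) ^ 2 + (c₂ x₀) ^ 2 + x₀ ^ 2) / 2 with hd₂def
  have hP : ∀ z ∈ Set.Ioo a b,
      c₁ z * c₂ z = d₁ ∧ (c₁ z) ^ 2 + (c₂ z) ^ 2 = 2 * d₂ - z ^ 2 := by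
    intro z hz
    constructor
    · exact const_on_Ioo (f := fun z => c₁ z * c₂ z)
        (fun t ht => (hd₁ t ht).mul (hd₂ t ht))
        (fun t ht => by
          rw [deriv_fun_mul (hd₁ t ht) (hd₂ t ht)]
          exact (key t ht).1) hz hx₀
    · have := const_on_Ioo (f := fun z => (c₁ z) ^ 2 + (c₂ z) ^ 2 + z ^ 2)
        (fun t ht => (((hd₁ t ht).pow 2).add ((hd₂ t ht).pow 2)).add
          (differentiable_pow 2 t))
        (fun t ht => by
          have k := (key t ht).2
          rw [deriv_fun_add (((hd₁ t ht).fun_pow 2).fun_add ((hd₂ t ht).fun_pow 2))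
              (differentiable_pow 2 t),
            deriv_fun_add ((hd₁ t ht).fun_pow 2) ((hd₂ t ht).fun_pow 2),
            deriv_fun_pow (hd₁ t ht) 2, deriv_fun_pow (hd₂ t ht) 2]
          simp only [Nat.cast_ofNat, pow_one]
          have hp : deriv (fun x : ℝ => x ^ 2) t = 2 * t := by
            simp [deriv_pow]
          rw [hp]; ring_nf; ring_nf at k; linarith) hz hx₀
      rw [hd₂def]; linarith
  refine ⟨d₁, d₂, hP, ?_, ?_⟩
  · intro hpos z hz
    obtain ⟨hprod, hsum⟩ := hP z hz
    obtain ⟨h1p, h2p⟩ := hpos z hz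
    have hdiff : (c₁ z) ^ 2 - (c₂ z) ^ 2 = Real.sqrt ((2 * d₂ - z ^ 2) ^ 2 - 4 * d₁ ^ 2) := by
      rw [show (2 * d₂ - z ^ 2) ^ 2 - 4 * d₁ ^ 2 = ((c₁ z) ^ 2 - (c₂ z) ^ 2) ^ 2 by
        rw [← hsum, ← hprod]; ring]
      rw [Real.sqrt_sq (by linarith)]
    constructor <;> linarith
  · intro hd z hz
    obtain ⟨hprod, hsum⟩ := hP z hz
    have hv : c₂ z = 0 := by
      rcases mul_eq_zero.mp (hprod.trans hd) with h | h
      · exact absurd h (hne z hz)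
      · exact h
    refine ⟨hv, ?_⟩
    rw [hv] at hsum; simpa using hsum
end

section
/- Let n ≥ 2 and let x, y ∈ ℝⁿ with y ≠ 0, and write r := |x|, u := |y|, v := ⟨x,y⟩ (Euclidean norm and inner product). Let φ = φ(r, u, v) be a C² function defined on a neighborhood of (r, u, v) in ℝ × (0,∞) × ℝ that is positively homogeneous of degree 1 in (u, v), i.e. φ(r, tu, tv) = t·φ(r, u, v) for all t > 0. Define the n×n real matrix g with entries g_{ij} := (φ·φ_u/u)·δ_{ij} + (φ_v² + φ·φ_{vv})·x_i·x_j + ( (φ_u² + φ·φ_{uu})/u² − φ·φ_u/u³ )·y_i·y_j + ( (φ_u·φ_v + φ·φ_{uv})/u )·(x_i·y_j + x_j·y_i), where all derivatives of φ are evaluated at (r, u, v) = (|x|, |y|, ⟨x,y⟩). Then det(g) = (φ/u)^{n+1}·φ_u^{n−2}·( φ_u + (r²u² − v²)·φ_{vv}/u ). -/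
open Matrix in
lemma aux_det_smul_one_add_mul {n : ℕ} (hn : 2 ≤ n) (c : ℝ)
    (A : Matrix (Fin n) (Fin 2) ℝ) (B : Matrix (Fin 2) (Fin n) ℝ) :
    (c • (1 : Matrix (Fin n) (Fin n) ℝ) + A * B).det
      = c ^ (n - 2) * (c • (1 : Matrix (Fin 2) (Fin 2) ℝ) + B * A).det := by
  have hcont1 : Continuous fun c : ℝ => (c • (1 : Matrix (Fin n) (Fin n) ℝ) + A * B).det :=
    Continuous.matrix_det <| (continuous_id.smul continuous_const).add continuous_const
  have hcont2 : Continuous fun c : ℝ =>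
      c ^ (n - 2) * (c • (1 : Matrix (Fin 2) (Fin 2) ℝ) + B * A).det :=
    (continuous_pow _).mul <|
      Continuous.matrix_det <| (continuous_id.smul continuous_const).add continuous_const
  have key : ∀ c : ℝ, c ≠ 0 →
      (c • (1 : Matrix (Fin n) (Fin n) ℝ) + A * B).det
        = c ^ (n - 2) * (c • (1 : Matrix (Fin 2) (Fin 2) ℝ) + B * A).det := by
    intro c hc
    have h1 : c • (1 : Matrix (Fin n) (Fin n) ℝ) + A * B
        = c • ((1 : Matrix (Fin n) (Fin n) ℝ) + A * (c⁻¹ • B)) := by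
      rw [smul_add, Matrix.mul_smul, smul_smul, mul_inv_cancel₀ hc, one_smul]
    have h2 : (1 : Matrix (Fin 2) (Fin 2) ℝ) + (c⁻¹ • B) * A
        = c⁻¹ • (c • (1 : Matrix (Fin 2) (Fin 2) ℝ) + B * A) := by
      rw [smul_add, smul_smul, inv_mul_cancel₀ hc, one_smul, Matrix.smul_mul]
    rw [h1, Matrix.det_smul, Matrix.det_one_add_mul_comm, h2, Matrix.det_smul]
    simp only [Fintype.card_fin]
    rw [inv_pow]
    field_simp
    rw [mul_right_comm, ← pow_add]
    congr 2
    omega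
  have := Continuous.ext_on (dense_compl_singleton (0 : ℝ)) hcont1 hcont2
    (fun c hc => key c hc)
  exact congrFun this c

open Matrix Finset in
lemma aux_det_rank_two {n : ℕ} (hn : 2 ≤ n) (c a b d : ℝ) (x y : Fin n → ℝ) :
    (Matrix.of fun i j : Fin n =>
        c * (if i = j then (1 : ℝ) else 0) + a * x i * x j + b * y i * y j
          + d * (x i * y j + x j * y i)).det
      = c ^ (n - 2) *
          ((c + a * (∑ i, x i * x i) + d * (∑ i, x i * y i)) *
              (c + d * (∑ i, x i * y i) + b * (∑ i, y i * y i)) -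
            (a * (∑ i, x i * y i) + d * (∑ i, y i * y i)) *
              (d * (∑ i, x i * x i) + b * (∑ i, x i * y i))) := by
  set A : Matrix (Fin n) (Fin 2) ℝ := Matrix.of fun i k => if k = 0 then x i else y i with hA
  set B : Matrix (Fin 2) (Fin n) ℝ :=
    Matrix.of fun k j => if k = 0 then a * x j + d * y j else d * x j + b * y j with hB
  have hM : (Matrix.of fun i j : Fin n =>
      c * (if i = j then (1 : ℝ) else 0) + a * x i * x j + b * y i * y j
        + d * (x i * y j + x j * y i)) = c • 1 + A * B := by
    ext i j
    simp only [Matrix.of_apply, Matrix.add_apply, Matrix.smul_apply, Matrix.one_apply,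
      Matrix.mul_apply, Fin.sum_univ_two, hA, hB, smul_eq_mul, mul_ite, mul_one, mul_zero]
    norm_num
    ring
  rw [hM, aux_det_smul_one_add_mul hn]
  have hBA : ∀ k l, (B * A) k l = ∑ j, B k j * A j l := fun k l => rfl
  have e00 : (B * A) 0 0 = a * (∑ i, x i * x i) + d * (∑ i, x i * y i) := by
    rw [hBA]
    rw [mul_sum, mul_sum, ← sum_add_distrib]
    refine Finset.sum_congr rfl fun j _ => ?_
    simp [hA, hB]; ring
  have e01 : (B * A) 0 1 = a * (∑ i, x i * y i) + d * (∑ i, y i * y i) := by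
    rw [hBA, mul_sum, mul_sum, ← sum_add_distrib]
    refine Finset.sum_congr rfl fun j _ => ?_
    simp [hA, hB]; ring
  have e10 : (B * A) 1 0 = d * (∑ i, x i * x i) + b * (∑ i, x i * y i) := by
    rw [hBA, mul_sum, mul_sum, ← sum_add_distrib]
    refine Finset.sum_congr rfl fun j _ => ?_
    simp [hA, hB]; ring
  have e11 : (B * A) 1 1 = d * (∑ i, x i * y i) + b * (∑ i, y i * y i) := by
    rw [hBA, mul_sum, mul_sum, ← sum_add_distrib]
    refine Finset.sum_congr rfl fun j _ => ?_
    simp [hA, hB]; ring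
  rw [Matrix.det_fin_two]
  have m00 : (c • (1 : Matrix (Fin 2) (Fin 2) ℝ) + B * A) 0 0 = c + (B * A) 0 0 := by
    simp [Matrix.one_apply]
  have m01 : (c • (1 : Matrix (Fin 2) (Fin 2) ℝ) + B * A) 0 1 = (B * A) 0 1 := by
    simp [Matrix.one_apply]
  have m10 : (c • (1 : Matrix (Fin 2) (Fin 2) ℝ) + B * A) 1 0 = (B * A) 1 0 := by
    simp [Matrix.one_apply]
  have m11 : (c • (1 : Matrix (Fin 2) (Fin 2) ℝ) + B * A) 1 1 = c + (B * A) 1 1 := by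
    simp [Matrix.one_apply]
  rw [m00, m01, m10, m11, e00, e01, e10, e11]
  ring


lemma aux_scalar {n : ℕ} (hn : 2 ≤ n) (u v R φ Pu Pv Puu Puv Pvv : ℝ) (hu : u ≠ 0)
    (E1 : u * Pu + v * Pv = φ) (E2 : u * Puu + v * Puv = 0) (E3 : u * Puv + v * Pvv = 0) :
    (φ * Pu / u) ^ (n - 2) *
        ((φ * Pu / u + (Pv ^ 2 + φ * Pvv) * R ^ 2 + (Pu * Pv + φ * Puv) / u * v) *
            (φ * Pu / u + (Pu * Pv + φ * Puv) / u * v +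
              ((Pu ^ 2 + φ * Puu) / u ^ 2 - φ * Pu / u ^ 3) * u ^ 2) -
          ((Pv ^ 2 + φ * Pvv) * v + (Pu * Pv + φ * Puv) / u * u ^ 2) *
            ((Pu * Pv + φ * Puv) / u * R ^ 2 + ((Pu ^ 2 + φ * Puu) / u ^ 2 - φ * Pu / u ^ 3) * v))
      = (φ / u) ^ (n + 1) * Pu ^ (n - 2) *
          (Pu + (R ^ 2 * u ^ 2 - v ^ 2) * Pvv / u) := by
  have hφ : φ = u * Pu + v * Pv := E1.symm
  subst hφ
  have hPuv : Puv = -(v * Pvv) / u := by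
    field_simp
    linarith [E3]
  subst hPuv
  have hPuu : Puu = v ^ 2 * Pvv / u ^ 2 := by
    field_simp at E2 ⊢
    nlinarith [E2]
  subst hPuu
  have h1 : (u * Pu + v * Pv) * Pu / u = (u * Pu + v * Pv) / u * Pu := by ring
  rw [h1, mul_pow, show n + 1 = (n - 2) + 3 by omega, pow_add]
  have key : ((u * Pu + v * Pv) / u * Pu +
          (Pv ^ 2 + (u * Pu + v * Pv) * Pvv) * R ^ 2 +
          (Pu * Pv + (u * Pu + v * Pv) * (-(v * Pvv) / u)) / u * v) *
        ((u * Pu + v * Pv) / u * Pu +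
            (Pu * Pv + (u * Pu + v * Pv) * (-(v * Pvv) / u)) / u * v +
            ((Pu ^ 2 + (u * Pu + v * Pv) * (v ^ 2 * Pvv / u ^ 2)) / u ^ 2 -
              (u * Pu + v * Pv) * Pu / u ^ 3) * u ^ 2) -
        ((Pv ^ 2 + (u * Pu + v * Pv) * Pvv) * v +
            (Pu * Pv + (u * Pu + v * Pv) * (-(v * Pvv) / u)) / u * u ^ 2) *
          ((Pu * Pv + (u * Pu + v * Pv) * (-(v * Pvv) / u)) / u * R ^ 2 +
            ((Pu ^ 2 + (u * Pu + v * Pv) * (v ^ 2 * Pvv / u ^ 2)) / u ^ 2 -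
              (u * Pu + v * Pv) * Pu / u ^ 3) * v)
      = ((u * Pu + v * Pv) / u) ^ 3 * (Pu + (R ^ 2 * u ^ 2 - v ^ 2) * Pvv / u) := by
    field_simp
    ring
  rw [key]
  ring


open Filter Topology

lemma aux_euler (r u v : ℝ) (φ : ℝ → ℝ → ℝ → ℝ)
    (hC : ContDiffAt ℝ 2 (fun p : ℝ × ℝ × ℝ => φ p.1 p.2.1 p.2.2) (r, u, v))
    (hhom : ∀ (r u v t : ℝ), 0 < t → φ r (t * u) (t * v) = t * φ r u v) :
    u * deriv (fun s => φ r s v) u + v * deriv (fun s => φ r u s) v = φ r u v ∧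
    u * deriv (deriv (fun s => φ r s v)) u
        + v * deriv (fun s => deriv (fun t => φ r s t) v) u = 0 ∧
    u * deriv (fun s => deriv (fun t => φ r s t) v) u
        + v * deriv (deriv (fun s => φ r u s)) v = 0 := by
  set f : ℝ × ℝ → ℝ := fun p => φ r p.1 p.2 with hfdef
  have hf : ContDiffAt ℝ 2 f (u, v) := by
    have h2 : ContDiffAt ℝ 2 (fun p : ℝ × ℝ => ((r, p) : ℝ × ℝ × ℝ)) (u, v) :=
      (contDiff_const.prodMk contDiff_id).contDiffAt
    exact hC.comp (u, v) h2
  have hfd : ∀ᶠ p in 𝓝 (u, v), DifferentiableAt ℝ f p :=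
    (hf.eventually (by norm_num)).mono fun p hp => hp.differentiableAt two_ne_zero
  set F' := fderiv ℝ f with hF'def
  have hF'c : ContDiffAt ℝ 1 F' (u, v) := hf.fderiv_right (by norm_num)
  have hF'd : DifferentiableAt ℝ F' (u, v) := hF'c.differentiableAt one_ne_zero
  set H := fderiv ℝ F' (u, v) with hHdef
  have hev : ∀ᶠ p in 𝓝 (u, v), HasFDerivAt f (F' p) p := hfd.mono fun p hp => hp.hasFDerivAt
  have hsymm : ∀ w z : ℝ × ℝ, H w z = H z w := fun w z =>
    second_derivative_symmetric_of_eventually_of_real hev hF'd.hasFDerivAt w z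
  have hpt : DifferentiableAt ℝ f (u, v) := hf.differentiableAt two_ne_zero
  -- curves
  have hcurve1 : ∀ p : ℝ × ℝ, HasDerivAt (fun s : ℝ => ((s, p.2) : ℝ × ℝ)) (1, 0) p.1 :=
    fun p => (hasDerivAt_id p.1).prodMk (hasDerivAt_const p.1 p.2)
  have hcurve2 : ∀ p : ℝ × ℝ, HasDerivAt (fun t : ℝ => ((p.1, t) : ℝ × ℝ)) (0, 1) p.2 :=
    fun p => (hasDerivAt_const p.2 p.1).prodMk (hasDerivAt_id p.2)
  have hd1 : ∀ p : ℝ × ℝ, DifferentiableAt ℝ f p →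
      HasDerivAt (fun s => φ r s p.2) (F' p ((1 : ℝ), (0 : ℝ))) p.1 := by
    intro p hp
    have hp' : HasFDerivAt f (F' p) (p.1, p.2) := by rw [Prod.mk.eta]; exact hp.hasFDerivAt
    exact hp'.comp_hasDerivAt p.1 (hcurve1 p)
  have hd2 : ∀ p : ℝ × ℝ, DifferentiableAt ℝ f p →
      HasDerivAt (fun t => φ r p.1 t) (F' p ((0 : ℝ), (1 : ℝ))) p.2 := by
    intro p hp
    have hp' : HasFDerivAt f (F' p) (p.1, p.2) := by rw [Prod.mk.eta]; exact hp.hasFDerivAt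
    exact hp'.comp_hasDerivAt p.2 (hcurve2 p)
  have hpos : ∀ᶠ t in 𝓝 (1 : ℝ), 0 < t :=
    eventually_nhds_iff.mpr ⟨Set.Ioi 0, fun t ht => ht, isOpen_Ioi, by norm_num⟩
  have hsm : HasDerivAt (fun t : ℝ => t • ((u, v) : ℝ × ℝ)) ((u, v) : ℝ × ℝ) 1 := by
    simpa using (hasDerivAt_id (1 : ℝ)).smul_const ((u, v) : ℝ × ℝ)
  -- Euler identity, first order
  have hE1' : F' (u, v) ((u, v) : ℝ × ℝ) = f (u, v) := by
    have hcomp : HasDerivAt (fun t : ℝ => f (t • ((u, v) : ℝ × ℝ))) (F' (u, v) (u, v)) 1 := by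
      have h0 : HasFDerivAt f (F' (u, v)) ((1 : ℝ) • ((u, v) : ℝ × ℝ)) := by
        simpa using hpt.hasFDerivAt
      exact h0.comp_hasDerivAt 1 hsm
    have heq : (fun t : ℝ => f (t • ((u, v) : ℝ × ℝ))) =ᶠ[𝓝 (1 : ℝ)]
        fun t => t * f (u, v) := by
      filter_upwards [hpos] with t ht
      show φ r (t * u) (t * v) = t * φ r u v
      exact hhom r u v t ht
    have hR : HasDerivAt (fun t : ℝ => t * f (u, v)) (f (u, v)) 1 := by
      simpa using (hasDerivAt_id (1 : ℝ)).mul_const (f (u, v))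
    exact ((hcomp.congr_of_eventuallyEq heq.symm).unique hR)
  have hdecomp : ((u, v) : ℝ × ℝ) = u • ((1 : ℝ), (0 : ℝ)) + v • ((0 : ℝ), (1 : ℝ)) := by
    simp [Prod.ext_iff]
  -- scaling invariance of F'
  have hscale : ∀ t : ℝ, 0 < t → DifferentiableAt ℝ f (t • ((u, v) : ℝ × ℝ)) →
      F' (t • ((u, v) : ℝ × ℝ)) = F' (u, v) := by
    intro t ht hdt
    have hsm2 : HasFDerivAt (fun q : ℝ × ℝ => t • q)
        (t • ContinuousLinearMap.id ℝ (ℝ × ℝ)) (u, v) :=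
      (hasFDerivAt_id ((u, v) : ℝ × ℝ)).const_smul t
    have h1 : HasFDerivAt (fun q : ℝ × ℝ => f (t • q))
        ((F' (t • ((u, v) : ℝ × ℝ))).comp (t • ContinuousLinearMap.id ℝ (ℝ × ℝ))) (u, v) :=
      hdt.hasFDerivAt.comp (u, v) hsm2
    have hfun : (fun q : ℝ × ℝ => f (t • q)) = fun q => t * f q := by
      funext q
      show φ r (t * q.1) (t * q.2) = t * φ r q.1 q.2
      exact hhom r q.1 q.2 t ht
    rw [hfun] at h1
    have h2 : HasFDerivAt (fun q : ℝ × ℝ => t * f q) (t • F' (u, v)) (u, v) := by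
      exact hpt.hasFDerivAt.const_mul t
    have h3 := h1.unique h2
    refine ContinuousLinearMap.ext_iff.mpr fun w => ?_
    have h4 := congrArg (fun L : ℝ × ℝ →L[ℝ] ℝ => L w) h3
    simp only [ContinuousLinearMap.comp_apply, ContinuousLinearMap.smul_apply,
      ContinuousLinearMap.coe_id', id_eq, map_smul, smul_eq_mul] at h4
    exact mul_left_cancel₀ ht.ne' h4
  have htd : Tendsto (fun t : ℝ => t • ((u, v) : ℝ × ℝ)) (𝓝 1) (𝓝 ((u, v) : ℝ × ℝ)) := by
    have hcont : Continuous fun t : ℝ => t • ((u, v) : ℝ × ℝ) :=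
      continuous_id.smul continuous_const
    simpa using hcont.tendsto 1
  have hF'const : ∀ᶠ t in 𝓝 (1 : ℝ), F' (t • ((u, v) : ℝ × ℝ)) = F' (u, v) := by
    filter_upwards [hpos, htd.eventually hfd] with t ht hdt
    exact hscale t ht hdt
  have hHpt : H ((u, v) : ℝ × ℝ) = 0 := by
    have hc1 : HasDerivAt (fun t : ℝ => F' (t • ((u, v) : ℝ × ℝ))) (H ((u, v) : ℝ × ℝ)) 1 := by
      have h0 : HasFDerivAt F' H ((1 : ℝ) • ((u, v) : ℝ × ℝ)) := by
        simpa using hF'd.hasFDerivAt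
      exact h0.comp_hasDerivAt 1 hsm
    have hc2 : HasDerivAt (fun t : ℝ => F' (t • ((u, v) : ℝ × ℝ))) 0 1 :=
      (hasDerivAt_const (1 : ℝ) (F' (u, v))).congr_of_eventuallyEq hF'const
    exact hc1.unique hc2
  -- identification of first partials
  have hPu : deriv (fun s => φ r s v) u = F' (u, v) ((1 : ℝ), (0 : ℝ)) := (hd1 (u, v) hpt).deriv
  have hPv : deriv (fun s => φ r u s) v = F' (u, v) ((0 : ℝ), (1 : ℝ)) := (hd2 (u, v) hpt).deriv
  -- eventual differentiability along coordinate lines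
  have hev1 : ∀ᶠ s in 𝓝 u, DifferentiableAt ℝ f ((s, v) : ℝ × ℝ) := by
    have hcont : Tendsto (fun s : ℝ => ((s, v) : ℝ × ℝ)) (𝓝 u) (𝓝 ((u, v) : ℝ × ℝ)) :=
      (continuous_id.prodMk continuous_const).tendsto u
    exact hcont.eventually hfd
  have hev2 : ∀ᶠ t in 𝓝 v, DifferentiableAt ℝ f ((u, t) : ℝ × ℝ) := by
    have hcont : Tendsto (fun t : ℝ => ((u, t) : ℝ × ℝ)) (𝓝 v) (𝓝 ((u, v) : ℝ × ℝ)) :=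
      (continuous_const.prodMk continuous_id).tendsto v
    exact hcont.eventually hfd
  -- second partials
  have hcF1 : HasDerivAt (fun s : ℝ => F' (s, v)) (H ((1 : ℝ), (0 : ℝ))) u := by
    have hp' : HasFDerivAt F' H ((u, v) : ℝ × ℝ) := hF'd.hasFDerivAt
    exact hp'.comp_hasDerivAt u (hcurve1 (u, v))
  have hcF2 : HasDerivAt (fun t : ℝ => F' (u, t)) (H ((0 : ℝ), (1 : ℝ))) v := by
    have hp' : HasFDerivAt F' H ((u, v) : ℝ × ℝ) := hF'd.hasFDerivAt
    exact hp'.comp_hasDerivAt v (hcurve2 (u, v))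
  have hPuu : deriv (deriv (fun s => φ r s v)) u
      = H ((1 : ℝ), (0 : ℝ)) ((1 : ℝ), (0 : ℝ)) := by
    have hder_u : deriv (fun s => φ r s v) =ᶠ[𝓝 u] fun s => F' (s, v) ((1 : ℝ), (0 : ℝ)) :=
      hev1.mono fun s hs => (hd1 (s, v) hs).deriv
    rw [hder_u.deriv_eq]
    have happ : HasDerivAt (fun s : ℝ => F' (s, v) ((1 : ℝ), (0 : ℝ)))
        (H ((1 : ℝ), (0 : ℝ)) ((1 : ℝ), (0 : ℝ))) u := by
      simpa using hcF1.clm_apply (hasDerivAt_const u (((1 : ℝ), (0 : ℝ)) : ℝ × ℝ))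
    exact happ.deriv
  have hPuv : deriv (fun s => deriv (fun t => φ r s t) v) u
      = H ((1 : ℝ), (0 : ℝ)) ((0 : ℝ), (1 : ℝ)) := by
    have hder_m : (fun s => deriv (fun t => φ r s t) v)
        =ᶠ[𝓝 u] fun s => F' (s, v) ((0 : ℝ), (1 : ℝ)) :=
      hev1.mono fun s hs => (hd2 (s, v) hs).deriv
    rw [hder_m.deriv_eq]
    have happ : HasDerivAt (fun s : ℝ => F' (s, v) ((0 : ℝ), (1 : ℝ)))
        (H ((1 : ℝ), (0 : ℝ)) ((0 : ℝ), (1 : ℝ))) u := by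
      simpa using hcF1.clm_apply (hasDerivAt_const u (((0 : ℝ), (1 : ℝ)) : ℝ × ℝ))
    exact happ.deriv
  have hPvv : deriv (deriv (fun s => φ r u s)) v
      = H ((0 : ℝ), (1 : ℝ)) ((0 : ℝ), (1 : ℝ)) := by
    have hder_v : deriv (fun s => φ r u s) =ᶠ[𝓝 v] fun t => F' (u, t) ((0 : ℝ), (1 : ℝ)) :=
      hev2.mono fun t ht => (hd2 (u, t) ht).deriv
    rw [hder_v.deriv_eq]
    have happ : HasDerivAt (fun t : ℝ => F' (u, t) ((0 : ℝ), (1 : ℝ)))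
        (H ((0 : ℝ), (1 : ℝ)) ((0 : ℝ), (1 : ℝ))) v := by
      simpa using hcF2.clm_apply (hasDerivAt_const v (((0 : ℝ), (1 : ℝ)) : ℝ × ℝ))
    exact happ.deriv
  have hdec1 : ∀ L : ℝ × ℝ →L[ℝ] ℝ, L ((u, v) : ℝ × ℝ) = u * L (1, 0) + v * L (0, 1) := by
    intro L
    rw [hdecomp, map_add, map_smul, map_smul, smul_eq_mul, smul_eq_mul]
  have hdec2 : H ((u, v) : ℝ × ℝ)
      = u • H ((1 : ℝ), (0 : ℝ)) + v • H ((0 : ℝ), (1 : ℝ)) := by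
    rw [hdecomp, map_add, map_smul, map_smul]
  have h1 : u • H ((1 : ℝ), (0 : ℝ)) + v • H ((0 : ℝ), (1 : ℝ)) = 0 := by
    rw [← hdec2]; exact hHpt
  refine ⟨?_, ?_, ?_⟩
  · rw [hPu, hPv, ← hdec1 (F' (u, v))]
    exact hE1'
  · rw [hPuu, hPuv, hsymm ((1 : ℝ), (0 : ℝ)) ((0 : ℝ), (1 : ℝ))]
    have h2 := congrArg (fun L : ℝ × ℝ →L[ℝ] ℝ => L ((1 : ℝ), (0 : ℝ))) h1
    simpa using h2
  · rw [hPuv, hPvv]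
    have h2 := congrArg (fun L : ℝ × ℝ →L[ℝ] ℝ => L ((0 : ℝ), (1 : ℝ))) h1
    simpa using h2


/-- Determinant of the fundamental tensor of a spherically symmetric Finsler
metric F = φ(|x|, |y|, ⟨x,y⟩):
det(g) = (φ/u)^(n+1) · φ_u^(n−2) · (φ_u + (r²u² − v²)·φ_vv/u). -/
theorem stmt_19 (n : ℕ) (hn : 2 ≤ n) (x y : EuclideanSpace ℝ (Fin n)) (hy : y ≠ 0)
    (φ : ℝ → ℝ → ℝ → ℝ)
    (hC : ContDiffAt ℝ 2 (fun p : ℝ × ℝ × ℝ => φ p.1 p.2.1 p.2.2)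
      (‖x‖, ‖y‖, (inner ℝ x y : ℝ)))
    (hhom : ∀ (r u v t : ℝ), 0 < t → φ r (t * u) (t * v) = t * φ r u v) :
    (Matrix.of fun i j : Fin n =>
        φ ‖x‖ ‖y‖ (inner ℝ x y : ℝ) * deriv (fun s => φ ‖x‖ s (inner ℝ x y : ℝ)) ‖y‖ / ‖y‖ *
            (if i = j then (1 : ℝ) else 0) +
          ((deriv (fun s => φ ‖x‖ ‖y‖ s) (inner ℝ x y : ℝ)) ^ 2 +
              φ ‖x‖ ‖y‖ (inner ℝ x y : ℝ) *
                deriv (deriv (fun s => φ ‖x‖ ‖y‖ s)) (inner ℝ x y : ℝ)) * x i * x j +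
          (((deriv (fun s => φ ‖x‖ s (inner ℝ x y : ℝ)) ‖y‖) ^ 2 +
                φ ‖x‖ ‖y‖ (inner ℝ x y : ℝ) *
                  deriv (deriv (fun s => φ ‖x‖ s (inner ℝ x y : ℝ))) ‖y‖) / ‖y‖ ^ 2 -
              φ ‖x‖ ‖y‖ (inner ℝ x y : ℝ) *
                deriv (fun s => φ ‖x‖ s (inner ℝ x y : ℝ)) ‖y‖ / ‖y‖ ^ 3) * y i * y j +
          (deriv (fun s => φ ‖x‖ s (inner ℝ x y : ℝ)) ‖y‖ *
                deriv (fun s => φ ‖x‖ ‖y‖ s) (inner ℝ x y : ℝ) +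
              φ ‖x‖ ‖y‖ (inner ℝ x y : ℝ) *
                deriv (fun s => deriv (fun t => φ ‖x‖ s t) (inner ℝ x y : ℝ)) ‖y‖) / ‖y‖ *
            (x i * y j + x j * y i)).det =
      (φ ‖x‖ ‖y‖ (inner ℝ x y : ℝ) / ‖y‖) ^ (n + 1) *
        (deriv (fun s => φ ‖x‖ s (inner ℝ x y : ℝ)) ‖y‖) ^ (n - 2) *
        (deriv (fun s => φ ‖x‖ s (inner ℝ x y : ℝ)) ‖y‖ +
          (‖x‖ ^ 2 * ‖y‖ ^ 2 - (inner ℝ x y : ℝ) ^ 2) *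
            deriv (deriv (fun s => φ ‖x‖ ‖y‖ s)) (inner ℝ x y : ℝ) / ‖y‖) := by
  have hu : ‖y‖ ≠ 0 := norm_ne_zero_iff.mpr hy
  obtain ⟨E1, E2, E3⟩ := aux_euler ‖x‖ ‖y‖ (inner ℝ x y : ℝ) φ hC hhom
  have hxx : ∑ i, x i * x i = ‖x‖ ^ 2 := by
    rw [EuclideanSpace.norm_eq, Real.sq_sqrt (Finset.sum_nonneg fun i _ => sq_nonneg _)]
    simp [sq, Real.norm_eq_abs]
  have hyy : ∑ i, y i * y i = ‖y‖ ^ 2 := by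
    rw [EuclideanSpace.norm_eq, Real.sq_sqrt (Finset.sum_nonneg fun i _ => sq_nonneg _)]
    simp [sq, Real.norm_eq_abs]
  have hxy : ∑ i, x i * y i = (inner ℝ x y : ℝ) := by
    simp [PiLp.inner_apply, RCLike.inner_apply, conj_trivial]
    exact Finset.sum_congr rfl fun i _ => mul_comm _ _
  rw [aux_det_rank_two hn
    (φ ‖x‖ ‖y‖ (inner ℝ x y : ℝ) * deriv (fun s => φ ‖x‖ s (inner ℝ x y : ℝ)) ‖y‖ / ‖y‖)
    ((deriv (fun s => φ ‖x‖ ‖y‖ s) (inner ℝ x y : ℝ)) ^ 2 +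
        φ ‖x‖ ‖y‖ (inner ℝ x y : ℝ) * deriv (deriv (fun s => φ ‖x‖ ‖y‖ s)) (inner ℝ x y : ℝ))
    (((deriv (fun s => φ ‖x‖ s (inner ℝ x y : ℝ)) ‖y‖) ^ 2 +
          φ ‖x‖ ‖y‖ (inner ℝ x y : ℝ) *
            deriv (deriv (fun s => φ ‖x‖ s (inner ℝ x y : ℝ))) ‖y‖) / ‖y‖ ^ 2 -
        φ ‖x‖ ‖y‖ (inner ℝ x y : ℝ) * deriv (fun s => φ ‖x‖ s (inner ℝ x y : ℝ)) ‖y‖ / ‖y‖ ^ 3)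
    ((deriv (fun s => φ ‖x‖ s (inner ℝ x y : ℝ)) ‖y‖ *
          deriv (fun s => φ ‖x‖ ‖y‖ s) (inner ℝ x y : ℝ) +
        φ ‖x‖ ‖y‖ (inner ℝ x y : ℝ) *
          deriv (fun s => deriv (fun t => φ ‖x‖ s t) (inner ℝ x y : ℝ)) ‖y‖) / ‖y‖)
    x y, hxx, hyy, hxy]
  exact aux_scalar hn ‖y‖ (inner ℝ x y : ℝ) ‖x‖ (φ ‖x‖ ‖y‖ (inner ℝ x y : ℝ))
    (deriv (fun s => φ ‖x‖ s (inner ℝ x y : ℝ)) ‖y‖)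
    (deriv (fun s => φ ‖x‖ ‖y‖ s) (inner ℝ x y : ℝ))
    (deriv (deriv (fun s => φ ‖x‖ s (inner ℝ x y : ℝ))) ‖y‖)
    (deriv (fun s => deriv (fun t => φ ‖x‖ s t) (inner ℝ x y : ℝ)) ‖y‖)
    (deriv (deriv (fun s => φ ‖x‖ ‖y‖ s)) (inner ℝ x y : ℝ))
    hu E1 E2 E3
end
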